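/- Let n = 2^s with s ≥ 2 and h(z) = Σ_{i=0}^{n-1} a_i z^i ∈ F_2[z]/(z^n-1) with a_0 = 1. Then h(z) = g(z)·g*(z) in F_2[z]/(z^n-1) for some g ∈ F_2[z]/(z^n-1) if and only if: h is symmetric (a_i = a_{n-i} for 1 ≤ i ≤ n-1), a_{n/2} = 0, and Σ_{1 ≤ i ≤ n/2-1, i odd} a_i = 0. -/

import Mathlib

open Polynomial Finset

/-- Cyclic convolution: multiplication in `F[x]/(x^n - 1)` on coefficient vectors. -/
def cconv (n : ℕ) [NeZero n] {F : Type*} [CommRing F] (a b : ZMod n → F) : ZMod n → F :=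
  fun k => ∑ i : ZMod n, a i * b (k - i)

/-- Reciprocal polynomial `g*(z) = Σ b_i z^{n-i}` on coefficient vectors. -/
def cstar (n : ℕ) {F : Type*} (a : ZMod n → F) : ZMod n → F := fun i => a (-i)

/-- The polynomial `Σ_{i=0}^{n-1} a_i x^i` attached to a coefficient vector. -/
noncomputable def toPoly (n : ℕ) [NeZero n] {F : Type*} [CommRing F] (a : ZMod n → F) : Polynomial F :=
  ∑ i : Fin n, Polynomial.C (a ((i : ℕ) : ZMod n)) * Polynomial.X ^ (i : ℕ)

set_option linter.unusedSectionVars false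

namespace SD

variable (n : ℕ) [NeZero n]

abbrev Rng := AddMonoidAlgebra (ZMod 2) (ZMod n)

instance : CoeFun (Rng n) (fun _ => ZMod n → ZMod 2) := ⟨fun x => x.coeff⟩

noncomputable def zeta (m : ZMod n) : Rng n := AddMonoidAlgebra.single m 1

variable {n}

lemma zeta_mul (a b : ZMod n) : zeta n a * zeta n b = zeta n (a + b) := by
  simp [zeta, AddMonoidAlgebra.single_mul_single]

lemma zeta_zero : zeta n 0 = 1 := rfl

lemma zeta_pow (a : ZMod n) (k : ℕ) : zeta n a ^ k = zeta n (k • a) := by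
  simp [zeta, AddMonoidAlgebra.single_pow]

/-- the involution σ induced by negation -/
noncomputable def sig : Rng n →+* Rng n :=
  AddMonoidAlgebra.mapDomainRingHom (ZMod 2) (AddEquiv.neg (ZMod n))

lemma sig_apply (x : Rng n) (i : ZMod n) : sig x i = x (-i) := by
  have : sig x (-(-i)) = x (-i) :=
    Finsupp.mapDomain_apply neg_injective x.coeff (-i)
  simpa using this

/-- the augmentation map -/
noncomputable def aug : Rng n →ₐ[ZMod 2] ZMod 2 :=
  (AddMonoidAlgebra.lift (ZMod 2) (ZMod 2) (ZMod n)) 1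

lemma aug_single (a : ZMod n) (b : ZMod 2) : aug (AddMonoidAlgebra.single a b) = b := by
  simp [aug]

lemma aug_zeta (a : ZMod n) : aug (zeta n a) = 1 := aug_single a 1

lemma aug_eq_sum (x : Rng n) : aug x = ∑ i : ZMod n, x i := by
  rw [aug, AddMonoidAlgebra.lift_apply]
  rw [Finsupp.sum_fintype]
  · simp
  · intro i; simp



set_option linter.unusedSectionVars false


lemma mul_apply' (x y : Rng n) (k : ZMod n) :
    (x * y) k = ∑ i : ZMod n, x i * y (k - i) := by
  classical
  rw [AddMonoidAlgebra.mul_apply_antidiagonal x y k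
    (Finset.univ.image (fun i => (i, k - i)))]
  · rw [Finset.sum_image (by intro a _ b _ h; exact (Prod.mk.injEq _ _ _ _ ▸ h).1)]
  · intro p
    simp only [Finset.mem_image, Finset.mem_univ, true_and]
    constructor
    · rintro ⟨i, rfl⟩; simp
    · rintro h; exact ⟨p.1, by rw [← h]; simp⟩

instance : CharP (Rng n) 2 := by
  apply charP_of_injective_algebraMap (R := ZMod 2)
  intro a b h
  have := congrArg (fun (f : Rng n) => f 0) h
  simpa [Algebra.algebraMap_eq_smul_one, AddMonoidAlgebra.one_def, Finsupp.single_apply] using this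




noncomputable def nsm (m : ℕ) : ZMod n →+ ZMod n := AddMonoidHom.mk' (fun a => m • a) (by
  intro a b; simp [smul_add])

noncomputable def Dm (m : ℕ) : Rng n →+* Rng n :=
  AddMonoidAlgebra.mapDomainRingHom (ZMod 2) (nsm m)

lemma Dm_apply (m : ℕ) (x : Rng n) : Dm m x = AddMonoidAlgebra.mapDomain (fun a => m • a) x := rfl

lemma sq_eq (x : Rng n) : x ^ 2 = Dm 2 x := by
  have h : (frobenius (Rng n) 2) = (Dm 2 : Rng n →+* Rng n) := by
    apply AddMonoidAlgebra.ringHom_ext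
    · intro b
      have hb : b * b = b := by revert b; decide
      simp [frobenius_def, Dm_apply, AddMonoidAlgebra.mapDomain_single, pow_two,
        AddMonoidAlgebra.single_mul_single, hb]
    · intro a
      simp [frobenius_def, Dm_apply, AddMonoidAlgebra.mapDomain_single, pow_two,
        AddMonoidAlgebra.single_mul_single, two_nsmul, two_mul]
  have := congrFun (congrArg (fun (f : Rng n →+* Rng n) => (f : Rng n → Rng n)) h) x
  simpa [frobenius_def] using this

lemma pow_two_pow (x : Rng n) (k : ℕ) : x ^ (2 ^ k) = Dm (2 ^ k) x := by
  induction k with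
  | zero =>
    rw [pow_zero, pow_one, Dm_apply]
    simp only [one_smul]
    exact congrArg AddMonoidAlgebra.ofCoeff (Finsupp.mapDomain_id (v := x.coeff)).symm
    
  | succ k ih =>
    have : x ^ (2 ^ (k+1)) = (x ^ (2^k)) ^ 2 := by rw [← pow_mul, pow_succ]
    rw [this, ih, sq_eq, Dm_apply, Dm_apply, Dm_apply]
    simp only [AddMonoidAlgebra.mapDomain, AddMonoidAlgebra.coeff_ofCoeff, ← Finsupp.mapDomain_comp]
    congr 2
    funext a
    show (2:ℕ) • ((2^k :ℕ) • a) = (2^(k+1):ℕ) • a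
    rw [← mul_smul]
    congr 1
    ring

lemma pow_n (x : Rng n) {s : ℕ} (hn : n = 2 ^ s) :
    x ^ n = AddMonoidAlgebra.single (0 : ZMod n) (aug x) := by
  have h1 : x ^ n = Dm n x := by subst hn; exact pow_two_pow x s
  have h2 : (Dm n : Rng n →+* Rng n) =
      (AddMonoidAlgebra.singleZeroRingHom (R := ZMod 2) (M := ZMod n)).comp
        (aug.toRingHom : Rng n →+* ZMod 2) := by
    apply AddMonoidAlgebra.ringHom_ext
    · intro b
      simp [Dm_apply, AddMonoidAlgebra.mapDomain_single, AddMonoidAlgebra.singleZeroRingHom, aug_single]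
    · intro a
      have : n • a = 0 := by
        rw [nsmul_eq_mul, ZMod.natCast_self, zero_mul]
      simp [Dm_apply, AddMonoidAlgebra.mapDomain_single, AddMonoidAlgebra.singleZeroRingHom, aug_single,
        this]
  rw [h1]
  have := congrFun (congrArg (fun (f : Rng n →+* Rng n) => (f : Rng n → Rng n)) h2) x
  simpa [AddMonoidAlgebra.singleZeroRingHom] using this

lemma isUnit_of_aug (x : Rng n) {s : ℕ} (hn : n = 2 ^ s) (hx : aug x = 1) : IsUnit x := by
  have hnil : IsNilpotent (x - 1) := by
    refine ⟨n, ?_⟩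
    rw [pow_n _ hn]
    have : aug (x - 1) = 0 := by
      rw [map_sub, hx, map_one, sub_self]
    rw [this]
    simp
  have := hnil.isUnit_one_add
  simpa using this

variable (n) in
noncomputable def uu : Rng n := 1 + zeta n 1

lemma aug_uu : aug (uu n) = 0 := by
  rw [uu, map_add, map_one, aug_zeta]
  decide

lemma aug_uu_pow {m : ℕ} (hm : 0 < m) : aug (uu n ^ m) = 0 := by
  rw [map_pow, aug_uu, zero_pow (by omega : m ≠ 0)]

lemma natCast_rng (c : ℕ) : (c : Rng n) = AddMonoidAlgebra.single (0 : ZMod n) (c : ZMod 2) := by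
  induction c with
  | zero => simp
  | succ c ih =>
    rw [Nat.cast_succ, ih, Nat.cast_succ]
    rw [AddMonoidAlgebra.one_def]
    exact (AddMonoidAlgebra.single_add 0 (c : ZMod 2) 1).symm

lemma uu_pow_apply_zero {m : ℕ} (hm : m < n) : (uu n ^ m) 0 = 1 := by
  rw [uu, add_pow]
  rw [AddMonoidAlgebra.coeff_sum, Finsupp.finset_sum_apply]
  have hterm : ∀ k ∈ Finset.range (m+1),
      ((1:Rng n) ^ k * zeta n 1 ^ (m - k) * ((m.choose k : ℕ) : Rng n)) 0
        = if k = m then 1 else 0 := by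
    intro k hk
    rw [one_pow, one_mul, zeta_pow, natCast_rng]
    have : zeta n ((m - k) • (1:ZMod n)) * AddMonoidAlgebra.single (0 : ZMod n) ((m.choose k : ℕ) : ZMod 2)
        = AddMonoidAlgebra.single (((m-k : ℕ) : ZMod n)) ((m.choose k : ℕ) : ZMod 2) := by
      rw [zeta, AddMonoidAlgebra.single_mul_single, one_mul, add_zero, nsmul_eq_mul, mul_one]
    rw [this, AddMonoidAlgebra.coeff_single, Finsupp.single_apply]
    by_cases hkm : k = m
    · subst hkm
      simp
    · have hlt : m - k < n := lt_of_le_of_lt (Nat.sub_le _ _) hm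
      have hpos : 0 < m - k := by
        have := Finset.mem_range.mp hk; omega
      have hne : ((m - k : ℕ) : ZMod n) ≠ 0 := by
        intro h
        have hd := (ZMod.natCast_eq_zero_iff _ _).mp h
        have := Nat.le_of_dvd hpos hd
        omega
      rw [if_neg hne, if_neg hkm]
  rw [Finset.sum_congr rfl hterm]
  simp

lemma uu_pow_ne_zero {m : ℕ} (hm : m < n) : uu n ^ m ≠ 0 := by
  intro h
  have := uu_pow_apply_zero (n := n) hm
  rw [h] at this
  simp at this

lemma sig_zeta (a : ZMod n) : sig (zeta n a) = zeta n (-a) := by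
  simp only [sig, zeta, AddMonoidAlgebra.mapDomainRingHom]
  exact AddMonoidAlgebra.mapDomain_single

lemma sig_uu : sig (uu n) = zeta n (-1) * uu n := by
  rw [uu, map_add, map_one, sig_zeta]
  rw [mul_add, mul_one, zeta_mul]
  rw [neg_add_cancel, zeta_zero]
  exact add_comm _ _

lemma norm_leading {κ : ℕ} (hκ : 2 ≤ κ) (hκn : 2*κ < n) :
    ∃ w : Rng n, aug w = 1 ∧
      (1 + uu n ^ (2*κ-1)) * sig (1 + uu n ^ (2*κ-1)) = 1 + uu n ^ (2*κ) * w := by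
  obtain ⟨c, rfl⟩ : ∃ c, κ = c + 2 := ⟨κ - 2, by omega⟩
  have e1 : 2*(c+2)-1 = 2*c+3 := by omega
  have e2 : 2*(c+2) = 2*c+4 := by omega
  rw [e1, e2]
  set Z : Rng n := zeta n ((2*c+3 : ℕ) : ZMod n) with hZ
  set B : Rng n := zeta n (-((2*c+3 : ℕ) : ZMod n)) with hB'
  set Q : Rng n := ∑ i ∈ Finset.range (2*c+3), zeta n 1 ^ i with hQ'
  have hzeta1 : zeta n 1 ^ (2*c+3) = Z := by
    rw [zeta_pow]
    congr 1
    rw [nsmul_eq_mul, mul_one]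
  have hQ : Q * uu n = Z + 1 := by
    have h2 : (zeta n 1 - 1 : Rng n) = uu n := by
      rw [CharTwo.sub_eq_add, uu, add_comm]
    rw [← h2, hQ', geom_sum_mul, hzeta1, CharTwo.sub_eq_add]
  have hB : B * Z = 1 := by
    rw [hB', hZ, zeta_mul, neg_add_cancel, zeta_zero]
  have hsig : sig (1 + uu n ^ (2*c+3)) = 1 + B * uu n ^ (2*c+3) := by
    rw [map_add, map_one, map_pow, sig_uu]
    congr 1
    rw [mul_pow, zeta_pow]
    congr 2
    rw [nsmul_eq_mul]
    push_cast
    ring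
  refine ⟨B * (Q + uu n ^ (2*c+2)), ?_, ?_⟩
  · have haugB : aug B = 1 := aug_zeta _
    have haugQ : aug Q = 1 := by
      rw [hQ', map_sum]
      have : ∀ i ∈ Finset.range (2*c+3), aug (zeta n 1 ^ i) = 1 := by
        intro i _
        rw [map_pow, aug_zeta, one_pow]
      rw [Finset.sum_congr rfl this]
      simp only [Finset.sum_const, Finset.card_range, nsmul_eq_mul, mul_one]
      have : ((2*c+3 : ℕ) : ZMod 2) = 1 := by
        push_cast
        rw [(by decide : (2 : ZMod 2) = 0)]
        ring_nf
        decide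
      exact this
    have haugU : aug (uu n ^ (2*c+2)) = 0 := aug_uu_pow (by omega)
    rw [map_mul, map_add, haugB, haugQ, haugU, add_zero, one_mul]
  · rw [hsig]
    linear_combination (-(uu n^(2*c+3)) * B) * hQ + (-(uu n^(2*c+3))) * hB

variable (n) in
/-- the norm of `1 + u^(2κ-1)` -/
noncomputable def hk (κ : ℕ) : Rng n :=
  (1 + uu n ^ (2*κ-1)) * sig (1 + uu n ^ (2*κ-1))

lemma one_add_pow_mul_ne {s : ℕ} (hn : n = 2^s) {m : ℕ} (hm : m < n) {w : Rng n}
    (hw : aug w = 1) : uu n ^ m * w ≠ 0 := by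
  intro h
  obtain ⟨v, hv⟩ := (isUnit_of_aug w hn hw).exists_right_inv
  have : uu n ^ m = 0 := by
    calc uu n ^ m = uu n ^ m * (w * v) := by rw [hv, mul_one]
    _ = (uu n ^ m * w) * v := by ring
    _ = 0 := by rw [h, zero_mul]
  exact uu_pow_ne_zero hm this

lemma prod_struct (N : ℕ) : ∀ (S : Finset ℕ), S.card ≤ N → ∀ (hS : S.Nonempty),
    (∀ κ ∈ S, 2 ≤ κ ∧ 2*κ < n) →
    ∃ w, aug w = 1 ∧ ∏ κ ∈ S, hk n κ = 1 + uu n ^ (2 * S.min' hS) * w := by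
  induction N with
  | zero =>
    intro S hcard hS _
    obtain ⟨x, hx⟩ := hS
    have := Finset.card_pos.mpr ⟨x, hx⟩
    omega
  | succ N ih =>
    intro S hcard hS hb
    set m := S.min' hS with hm
    have hmS : m ∈ S := S.min'_mem hS
    obtain ⟨hm2, hmn⟩ := hb m hmS
    obtain ⟨w, hw, hkm⟩ := norm_leading (n := n) hm2 hmn
    have hprod : ∏ κ ∈ S, hk n κ = hk n m * ∏ κ ∈ S.erase m, hk n κ :=
      (Finset.mul_prod_erase S _ hmS).symm
    rcases (S.erase m).eq_empty_or_nonempty with hempty | hne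
    · refine ⟨w, hw, ?_⟩
      rw [hprod, hempty, Finset.prod_empty, mul_one, hk, hkm]
    · have hcard' : (S.erase m).card ≤ N := by
        have := Finset.card_erase_of_mem hmS
        omega
      have hb' : ∀ κ ∈ S.erase m, 2 ≤ κ ∧ 2*κ < n := fun κ hκ =>
        hb κ (Finset.mem_of_mem_erase hκ)
      obtain ⟨w', hw', hprod'⟩ := ih (S.erase m) hcard' hne hb'
      set m' := (S.erase m).min' hne with hm'
      have hmm' : m < m' := by
        have h1 : m' ∈ S.erase m := (S.erase m).min'_mem hne
        have h2 : m' ≠ m := Finset.ne_of_mem_erase h1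
        have h3 : m ≤ m' := S.min'_le m' (Finset.mem_of_mem_erase h1)
        omega
      have hpow : uu n ^ (2*m') = uu n ^ (2*m) * uu n ^ (2*m' - 2*m) := by
        rw [← pow_add]
        congr 1
        omega
      refine ⟨w + uu n ^ (2*m' - 2*m) * w' * (1 + uu n ^ (2*m) * w), ?_, ?_⟩
      · rw [map_add, hw, map_mul, map_mul, aug_uu_pow (by omega), zero_mul, zero_mul, add_zero]
      · rw [hprod, hprod', hk, hkm]
        linear_combination (w' * (1 + uu n ^ (2*m) * w)) * hpow

lemma aug_hk {κ : ℕ} (hκ2 : 2 ≤ κ) (hκn : 2*κ < n) : aug (hk n κ) = 1 := by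
  obtain ⟨w, hw, h⟩ := norm_leading (n := n) hκ2 hκn
  rw [hk, h, map_add, map_one, map_mul, aug_uu_pow (by omega), zero_mul, add_zero]

lemma prods_ne_aux {s : ℕ} (hn : n = 2^s) (A B : Finset ℕ)
    (hAb : ∀ κ ∈ A, 2 ≤ κ ∧ 2*κ < n) (hBb : ∀ κ ∈ B, 2 ≤ κ ∧ 2*κ < n)
    (hA : A.Nonempty)
    (hmin : ∀ (hB : B.Nonempty), A.min' hA < B.min' hB) :
    ∏ κ ∈ A, hk n κ ≠ ∏ κ ∈ B, hk n κ := by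
  intro heq
  obtain ⟨w, hw, hA'⟩ := prod_struct A.card A le_rfl hA hAb
  have hmA := (hAb _ (A.min'_mem hA)).2
  rcases B.eq_empty_or_nonempty with hBe | hBne
  · rw [hBe, Finset.prod_empty, hA'] at heq
    have : uu n ^ (2 * A.min' hA) * w = 0 := by
      have := congrArg (fun x => x - 1) heq
      simpa using this
    exact one_add_pow_mul_ne hn (by omega) hw this
  · obtain ⟨w', hw', hB'⟩ := prod_struct B.card B le_rfl hBne hBb
    have hmm : A.min' hA < B.min' hBne := hmin hBne
    rw [hA', hB'] at heq
    have heq2 : uu n ^ (2 * A.min' hA) * w = uu n ^ (2 * B.min' hBne) * w' := by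
      have := congrArg (fun x => x - 1) heq
      simpa using this
    have hpow : uu n ^ (2*(B.min' hBne)) =
        uu n ^ (2*(A.min' hA)) * uu n ^ (2*(B.min' hBne) - 2*(A.min' hA)) := by
      rw [← pow_add]; congr 1; omega
    have : uu n ^ (2 * A.min' hA) *
        (w + uu n ^ (2*(B.min' hBne) - 2*(A.min' hA)) * w') = 0 := by
      rw [hpow] at heq2
      have h2 : (2 : Rng n) = 0 := by
        calc (2 : Rng n) = ((2:ℕ) : Rng n) := by norm_num
        _ = AddMonoidAlgebra.single 0 ((2:ℕ) : ZMod 2) := natCast_rng 2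
        _ = 0 := by rw [(by decide : ((2:ℕ) : ZMod 2) = 0)]; simp
      linear_combination heq2 + (uu n ^ (2 * A.min' hA) *
        uu n ^ (2*(B.min' hBne) - 2*(A.min' hA)) * w') * h2
    have haug : aug (w + uu n ^ (2*(B.min' hBne) - 2*(A.min' hA)) * w') = 1 := by
      rw [map_add, hw, map_mul, aug_uu_pow (by omega), zero_mul, add_zero]
    exact one_add_pow_mul_ne hn (by omega) haug this

lemma prod_inj {s : ℕ} (hn : n = 2^s) {S T : Finset ℕ}
    (hSb : ∀ κ ∈ S, 2 ≤ κ ∧ 2*κ < n) (hTb : ∀ κ ∈ T, 2 ≤ κ ∧ 2*κ < n)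
    (heq : ∏ κ ∈ S, hk n κ = ∏ κ ∈ T, hk n κ) : S = T := by
  classical
  by_contra hne
  have hunit : IsUnit (∏ κ ∈ S ∩ T, hk n κ) := by
    apply isUnit_of_aug _ hn
    rw [map_prod]
    apply Finset.prod_eq_one
    intro κ hκ
    obtain ⟨h1, h2⟩ := hSb κ (Finset.mem_of_mem_inter_left hκ)
    exact aug_hk h1 h2
  have hcancel : ∏ κ ∈ S \ T, hk n κ = ∏ κ ∈ T \ S, hk n κ := by
    have e1 : (∏ κ ∈ S ∩ T, hk n κ) * ∏ κ ∈ S \ T, hk n κ = ∏ κ ∈ S, hk n κ :=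
      Finset.prod_inter_mul_prod_diff S T _
    have e2 : (∏ κ ∈ S ∩ T, hk n κ) * ∏ κ ∈ T \ S, hk n κ = ∏ κ ∈ T, hk n κ := by
      rw [Finset.inter_comm]
      exact Finset.prod_inter_mul_prod_diff T S _
    exact hunit.mul_left_cancel (by rw [e1, e2, heq])
  have hAb : ∀ κ ∈ S \ T, 2 ≤ κ ∧ 2*κ < n := fun κ hκ => hSb κ (Finset.mem_sdiff.mp hκ).1
  have hBb : ∀ κ ∈ T \ S, 2 ≤ κ ∧ 2*κ < n := fun κ hκ => hTb κ (Finset.mem_sdiff.mp hκ).1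
  have hdisj : Disjoint (S \ T) (T \ S) := disjoint_sdiff_sdiff
  rcases (S \ T).eq_empty_or_nonempty with hAe | hAne
  · rcases (T \ S).eq_empty_or_nonempty with hBe | hBne
    · exact hne (Finset.Subset.antisymm
        (Finset.sdiff_eq_empty_iff_subset.mp hAe) (Finset.sdiff_eq_empty_iff_subset.mp hBe))
    · refine prods_ne_aux hn (T \ S) (S \ T) hBb hAb hBne ?_ hcancel.symm
      intro hB
      rw [hAe] at hB
      exact absurd hB (by simp)
  · rcases (T \ S).eq_empty_or_nonempty with hBe | hBne
    · refine prods_ne_aux hn (S \ T) (T \ S) hAb hBb hAne ?_ hcancel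
      intro hB
      rw [hBe] at hB
      exact absurd hB (by simp)
    · have hmne : (S \ T).min' hAne ≠ (T \ S).min' hBne := by
        intro h
        have h1 := (S \ T).min'_mem hAne
        have h2 := (T \ S).min'_mem hBne
        rw [h] at h1
        exact (Finset.disjoint_left.mp hdisj h1) h2
      rcases lt_or_gt_of_ne hmne with hlt | hgt
      · exact prods_ne_aux hn (S \ T) (T \ S) hAb hBb hAne (fun _ => hlt) hcancel
      · exact prods_ne_aux hn (T \ S) (S \ T) hBb hAb hBne (fun _ => hgt) hcancel.symm

lemma coe_mul (x y : Rng n) : (⇑(x*y) : ZMod n → ZMod 2) = cconv n (⇑x) (⇑y) := by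
  funext k
  rw [cconv]
  exact mul_apply' x y k

lemma coe_sig (x : Rng n) : (⇑(sig x) : ZMod n → ZMod 2) = cstar n ⇑x :=
  funext (sig_apply x)

lemma nfacts {s : ℕ} (hn : n = 2^s) (hs : 2 ≤ s) :
    n/2 + n/2 = n ∧ 4 ≤ n ∧ 2 ∣ n/2 ∧ 2 ≤ n/2 := by
  have h1 : n = 4 * 2^(s-2) := by
    rw [hn]
    have hs2 : s = (s-2)+2 := by omega
    conv_lhs => rw [hs2]
    rw [pow_add]
    ring
  have h2 : 1 ≤ 2^(s-2) := Nat.one_le_two_pow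
  omega

lemma zmod2_cases (b : ZMod 2) : b = 0 ∨ b = 1 := by revert b; decide

lemma fwd {s : ℕ} (hn : n = 2^s) (hs : 2 ≤ s) (g : ZMod n → ZMod 2)
    (hg : ∑ i : ZMod n, g i = 1) :
    (cconv n g (cstar n g) 0 = 1) ∧
    (∀ i : ZMod n, cconv n g (cstar n g) i = cconv n g (cstar n g) (-i)) ∧
    cconv n g (cstar n g) ((n / 2 : ℕ) : ZMod n) = 0 ∧
    ∑ i ∈ (Finset.Ico 1 (n / 2)).filter (fun i => Odd i),
      cconv n g (cstar n g) ((i : ℕ) : ZMod n) = 0 := by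
  classical
  obtain ⟨hhalf, h4n, hev2, hge2⟩ := nfacts hn hs
  have hmulself : ∀ b : ZMod 2, b * b = b := by decide
  have ha : ∀ k, cconv n g (cstar n g) k = ∑ i : ZMod n, g i * g (i - k) := by
    intro k
    rw [cconv]
    apply Finset.sum_congr rfl
    intro i _
    rw [cstar, neg_sub]
  refine ⟨?_, ?_, ?_, ?_⟩
  · rw [ha]
    simp only [sub_zero]
    rw [Finset.sum_congr rfl (fun i _ => hmulself (g i))]
    exact hg
  · intro k
    rw [ha, ha]
    apply Fintype.sum_equiv (Equiv.subRight k)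
    intro i
    simp only [Equiv.subRight_apply, sub_neg_eq_add, sub_add_cancel]
    exact mul_comm _ _
  · set c : ZMod n := ((n / 2 : ℕ) : ZMod n) with hc
    have hcc : c + c = 0 := by
      rw [hc, ← Nat.cast_add, hhalf, ZMod.natCast_self]
    have hc0 : c ≠ 0 := by
      rw [hc]
      intro h
      have hd := (ZMod.natCast_eq_zero_iff _ _).mp h
      have := Nat.le_of_dvd (by omega) hd
      omega
    rw [ha]
    apply Finset.sum_involution (fun i _ => i + c)
    · intro i _
      have h1 : i + c - c = i := by rw [add_sub_cancel_right]
      have h2 : i - c = i + c := by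
        have : -c = c := by
          rw [neg_eq_iff_add_eq_zero, hcc]
        rw [sub_eq_add_neg, this]
      rw [h1, h2, mul_comm]
      exact CharTwo.add_self_eq_zero _
    · intro i _ _
      intro h
      exact hc0 (by have := add_eq_left.mp h; exact this)
    · intro i _; exact Finset.mem_univ _
    · intro i _
      rw [add_assoc, hcc, add_zero]
  · -- the odd-sum condition
    set π : ZMod n →+* ZMod 2 := ZMod.castHom (by omega : (2:ℕ) ∣ n) (ZMod 2) with hπ
    have hπval : ∀ d : ZMod n, π d = ((d.val : ℕ) : ZMod 2) := by
      intro d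
      conv_lhs => rw [← ZMod.natCast_rightInverse d]
      rw [map_natCast]
    have hπodd : ∀ m : ℕ, Odd m → ((m : ℕ) : ZMod 2) = 1 := by
      intro m hm
      rw [← ZMod.natCast_mod, Nat.odd_iff.mp hm]
      rfl
    have hπeven : ∀ m : ℕ, ¬ Odd m → ((m : ℕ) : ZMod 2) = 0 := by
      intro m hm
      rw [← ZMod.natCast_mod]
      rw [Nat.not_odd_iff.mp hm]
      rfl
    set Io := (Finset.Ico 1 (n / 2)).filter (fun i => Odd i) with hIo
    set P := (Finset.univ.filter (fun j : ZMod n => π j = 0)) ×ˢ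
             (Finset.univ.filter (fun j : ZMod n => π j = 1)) with hP
    have key : ∑ i ∈ Io, cconv n g (cstar n g) ((i : ℕ) : ZMod n)
        = ∑ q ∈ P, g q.1 * g q.2 := by
      rw [Finset.sum_congr rfl (fun i _ => ha ((i : ℕ) : ZMod n))]
      rw [← Finset.sum_product']
      apply Finset.sum_nbij'
        (i := fun p : ℕ × ZMod n =>
          if π p.2 = 1 then (p.2 - (p.1 : ZMod n), p.2) else (p.2, p.2 - (p.1 : ZMod n)))
        (j := fun q : ZMod n × ZMod n =>
          if (q.1 - q.2).val < n/2 then ((q.1 - q.2).val, q.1) else ((q.2 - q.1).val, q.2))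
      · -- maps into P
        rintro ⟨i, j⟩ hp
        rw [Finset.mem_product, hIo, Finset.mem_filter, Finset.mem_Ico] at hp
        obtain ⟨⟨⟨hi1, hi2⟩, hio⟩, -⟩ := hp
        have hπi : π ((i : ℕ) : ZMod n) = 1 := by
          rw [map_natCast]
          exact hπodd i hio
        have hsub : π (j - (i : ℕ)) = π j + 1 := by
          rw [map_sub, hπi]
          rcases zmod2_cases (π j) with h | h <;> rw [h] <;> decide
        rcases zmod2_cases (π j) with h | h
        · rw [if_neg (by rw [h]; decide)]
          rw [hP, Finset.mem_product]
          constructor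
          · simp [h]
          · simp only [Finset.mem_filter, Finset.mem_univ, true_and]
            rw [hsub, h]; decide
        · rw [if_pos h]
          rw [hP, Finset.mem_product]
          constructor
          · simp only [Finset.mem_filter, Finset.mem_univ, true_and]
            rw [hsub, h]; decide
          · simp [h]
      · -- maps back
        rintro ⟨x, y⟩ hq
        rw [hP, Finset.mem_product, Finset.mem_filter, Finset.mem_filter] at hq
        obtain ⟨⟨-, hx⟩, ⟨-, hy⟩⟩ := hq
        have hxy : x ≠ y := fun h => by rw [h, hy] at hx; exact absurd hx (by decide)
        have hd0 : x - y ≠ 0 := fun h => hxy (by rwa [sub_eq_zero] at h)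
        have hd0' : y - x ≠ 0 := fun h => hxy (by rw [sub_eq_zero] at h; exact h.symm)
        have hπd : π (x - y) = 1 := by
          rw [map_sub, hx, hy]; decide
        have hπd' : π (y - x) = 1 := by
          rw [map_sub, hx, hy]; decide
        have hoddd : Odd (x - y).val := by
          rw [hπval] at hπd
          by_contra hcon
          rw [hπeven _ hcon] at hπd
          exact absurd hπd (by decide)
        have hoddd' : Odd (y - x).val := by
          rw [hπval] at hπd'
          by_contra hcon
          rw [hπeven _ hcon] at hπd'
          exact absurd hπd' (by decide)
        have hvsum : (x - y).val + (y - x).val = n := by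
          have h1 : y - x = -(x - y) := by ring
          rw [h1, ZMod.neg_val, if_neg hd0]
          have := ZMod.val_lt (x - y)
          omega
        have hne2 : (x - y).val ≠ n/2 := by
          intro h
          rcases hoddd with ⟨t, ht⟩
          omega
        have hval1 : 1 ≤ (x - y).val := by
          rcases Nat.eq_zero_or_pos (x - y).val with h0 | h0
          · exact absurd ((ZMod.val_eq_zero _).mp h0) hd0
          · omega
        have hval1' : 1 ≤ (y - x).val := by
          rcases Nat.eq_zero_or_pos (y - x).val with h0 | h0
          · exact absurd ((ZMod.val_eq_zero _).mp h0) hd0'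
          · omega
        by_cases hcase : (x - y).val < n/2
        · rw [if_pos hcase]
          rw [Finset.mem_product, hIo]
          refine ⟨Finset.mem_filter.mpr ⟨Finset.mem_Ico.mpr ⟨hval1, hcase⟩, hoddd⟩,
            Finset.mem_univ _⟩
        · rw [if_neg hcase]
          rw [Finset.mem_product, hIo]
          have : (y - x).val < n/2 := by omega
          refine ⟨Finset.mem_filter.mpr ⟨Finset.mem_Ico.mpr ⟨hval1', this⟩, hoddd'⟩,
            Finset.mem_univ _⟩
      · -- left inverse
        rintro ⟨i, j⟩ hp
        rw [Finset.mem_product, hIo, Finset.mem_filter, Finset.mem_Ico] at hp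
        obtain ⟨⟨⟨hi1, hi2⟩, hio⟩, -⟩ := hp
        have hvi : ((i : ℕ) : ZMod n).val = i := ZMod.val_natCast_of_lt (by omega)
        have hdne : ((i : ℕ) : ZMod n) ≠ 0 := by
          intro h
          have := (ZMod.val_eq_zero _).mpr h
          omega
        dsimp only
        rcases zmod2_cases (π j) with h | h
        · have hne1 : ¬ (π j = 1) := by rw [h]; decide
          rw [if_neg hne1]
          dsimp only
          rw [show j - (j - ((i:ℕ):ZMod n)) = ((i:ℕ):ZMod n) from by ring, hvi]
          rw [if_pos (by omega)]
        · rw [if_pos h]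
          dsimp only
          rw [show (j - ((i:ℕ):ZMod n)) - j = -((i:ℕ):ZMod n) from by ring]
          rw [ZMod.neg_val, if_neg hdne, hvi]
          rw [if_neg (by omega)]
          rw [show j - (j - ((i:ℕ):ZMod n)) = ((i:ℕ):ZMod n) from by ring, hvi]
      · -- right inverse
        rintro ⟨x, y⟩ hq
        rw [hP, Finset.mem_product, Finset.mem_filter, Finset.mem_filter] at hq
        obtain ⟨⟨-, hx⟩, ⟨-, hy⟩⟩ := hq
        dsimp only
        by_cases hcase : (x - y).val < n/2
        · rw [if_pos hcase]
          dsimp only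
          have hne1 : ¬ (π x = 1) := by rw [hx]; decide
          rw [if_neg hne1]
          rw [ZMod.natCast_rightInverse (x - y)]
          rw [show x - (x - y) = y from by ring]
        · rw [if_neg hcase]
          dsimp only
          rw [if_pos hy]
          rw [ZMod.natCast_rightInverse (y - x)]
          rw [show y - (y - x) = x from by ring]
      · -- terms agree
        rintro ⟨i, j⟩ hp
        dsimp only
        rcases zmod2_cases (π j) with h | h
        · have hne1 : ¬ (π j = 1) := by rw [h]; decide
          rw [if_neg hne1]
        · rw [if_pos h]
          exact mul_comm _ _
    rw [key]
    have hEO : (∑ j ∈ Finset.univ.filter (fun j : ZMod n => π j = 0), g j)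
        + (∑ j ∈ Finset.univ.filter (fun j : ZMod n => π j = 1), g j) = 1 := by
      have hsplit := Finset.sum_filter_add_sum_filter_not
        (Finset.univ : Finset (ZMod n)) (fun j => π j = 0) g
      have hfe : ∑ j ∈ Finset.univ.filter (fun j : ZMod n => ¬ (π j = 0)), g j
          = ∑ j ∈ Finset.univ.filter (fun j : ZMod n => π j = 1), g j := by
        apply Finset.sum_congr _ (fun _ _ => rfl)
        apply Finset.filter_congr
        intro j _
        rcases zmod2_cases (π j) with h | h <;> rw [h] <;> simp
      rw [← hfe, hsplit]
      exact hg
    have hprod : ∑ q ∈ P, g q.1 * g q.2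
        = (∑ j ∈ Finset.univ.filter (fun j : ZMod n => π j = 0), g j)
        * (∑ j ∈ Finset.univ.filter (fun j : ZMod n => π j = 1), g j) := by
      rw [Finset.sum_mul_sum, hP, ← Finset.sum_product']
    rw [hprod]
    revert hEO
    generalize (∑ j ∈ Finset.univ.filter (fun j : ZMod n => π j = 0), g j) = E
    generalize (∑ j ∈ Finset.univ.filter (fun j : ZMod n => π j = 1), g j) = O
    revert E O
    decide

variable (n) in
def Cond (a : ZMod n → ZMod 2) : Prop :=
  a 0 = 1 ∧ (∀ i : ZMod n, a i = a (-i)) ∧ a ((n / 2 : ℕ) : ZMod n) = 0 ∧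
  ∑ i ∈ (Finset.Ico 1 (n / 2)).filter (fun i => Odd i), a ((i : ℕ) : ZMod n) = 0

lemma determination {s : ℕ} (hn : n = 2^s) (hs : 2 ≤ s) {b b' : ZMod n → ZMod 2}
    (hb : Cond n b) (hb' : Cond n b')
    (agree : ∀ m : ℕ, 2 ≤ m → m < n/2 → b ((m : ℕ) : ZMod n) = b' ((m : ℕ) : ZMod n)) :
    b = b' := by
  classical
  obtain ⟨hhalf, h4n, hev2, hge2⟩ := nfacts hn hs
  obtain ⟨hb0, hbsym, hbh, hbsum⟩ := hb
  obtain ⟨hb0', hbsym', hbh', hbsum'⟩ := hb'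
  set Io := (Finset.Ico 1 (n / 2)).filter (fun i => Odd i) with hIo
  have key : ∀ m : ℕ, 1 ≤ m → m < n/2 → b ((m : ℕ) : ZMod n) = b' ((m : ℕ) : ZMod n) := by
    intro m h1 h2
    rcases Nat.lt_or_ge m 2 with hm2 | hm2
    · have hm1 : m = 1 := by omega
      subst hm1
      have h1mem : (1 : ℕ) ∈ Io := by
        rw [hIo, Finset.mem_filter, Finset.mem_Ico]
        exact ⟨⟨le_refl _, by omega⟩, odd_one⟩
      have he : ∑ i ∈ Io.erase 1, b ((i : ℕ) : ZMod n) + b ((1 : ℕ) : ZMod n) = 0 := by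
        rw [Finset.sum_erase_add _ _ h1mem]
        exact hbsum
      have he' : ∑ i ∈ Io.erase 1, b' ((i : ℕ) : ZMod n) + b' ((1 : ℕ) : ZMod n) = 0 := by
        rw [Finset.sum_erase_add _ _ h1mem]
        exact hbsum'
      have hsums : ∑ i ∈ Io.erase 1, b ((i : ℕ) : ZMod n)
          = ∑ i ∈ Io.erase 1, b' ((i : ℕ) : ZMod n) := by
        apply Finset.sum_congr rfl
        intro i hi
        have hi1 : i ≠ 1 := Finset.ne_of_mem_erase hi
        have hi2 : i ∈ Io := Finset.mem_of_mem_erase hi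
        rw [hIo, Finset.mem_filter, Finset.mem_Ico] at hi2
        exact agree i (by omega) hi2.1.2
      have hcalc : ∀ x y : ZMod 2, x + y = 0 → y = x := by decide
      rw [hcalc _ _ he, hcalc _ _ he', hsums]
    · exact agree m hm2 h2
  funext i
  have hvi : ((i.val : ℕ) : ZMod n) = i := ZMod.natCast_rightInverse i
  have hvn : i.val < n := ZMod.val_lt i
  by_cases h0 : i.val = 0
  · have : i = 0 := by rw [← hvi, h0]; simp
    rw [this, hb0, hb0']
  · by_cases hhf : i.val = n/2
    · have : i = ((n/2 : ℕ) : ZMod n) := by rw [← hvi, hhf]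
      rw [this, hbh, hbh']
    · by_cases hlt : i.val < n/2
      · rw [← hvi]
        exact key i.val (by omega) hlt
      · -- i.val > n/2 : use symmetry
        have hnegval : ((n - i.val : ℕ) : ZMod n) = -i := by
          rw [Nat.cast_sub (by omega : i.val ≤ n), ZMod.natCast_self, hvi]
          ring
        have h1 : b i = b (-i) := hbsym i
        have h1' : b' i = b' (-i) := hbsym' i
        rw [h1, h1', ← hnegval]
        exact key (n - i.val) (by omega) (by omega)

lemma backward {s : ℕ} (hn : n = 2^s) (hs : 2 ≤ s) (a : ZMod n → ZMod 2)
    (hc : Cond n a) : ∃ g : ZMod n → ZMod 2, a = cconv n g (cstar n g) := by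
  classical
  obtain ⟨hhalf, h4n, hev2, hge2⟩ := nfacts hn hs
  set K := Finset.Ico 2 (n/2) with hK
  set Sd : ({x // x ∈ K} → ZMod 2) → Finset ℕ :=
    fun d => (K.attach.filter (fun k => d k = 1)).image Subtype.val with hSd
  have hSdsub : ∀ d, ∀ κ ∈ Sd d, 2 ≤ κ ∧ 2*κ < n := by
    intro d κ hκ
    rw [hSd] at hκ
    simp only [Finset.mem_image, Finset.mem_filter, Finset.mem_attach, true_and] at hκ
    obtain ⟨x, -, rfl⟩ := hκ
    have hx2 : (x : ℕ) ∈ Finset.Ico 2 (n/2) := x.2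
    rw [Finset.mem_Ico] at hx2
    omega
  have hSdmem : ∀ d k (hk : k ∈ K), (k ∈ Sd d ↔ d ⟨k, hk⟩ = 1) := by
    intro d k hk
    rw [hSd]
    simp only [Finset.mem_image, Finset.mem_filter, Finset.mem_attach, true_and]
    constructor
    · rintro ⟨x, hx, rfl⟩
      exact hx
    · intro h
      exact ⟨⟨k, hk⟩, h, rfl⟩
  set Pd : ({x // x ∈ K} → ZMod 2) → Rng n :=
    fun d => ∏ κ ∈ Sd d, (1 + uu n ^ (2*κ-1)) with hPd
  have haugPd : ∀ d, aug (Pd d) = 1 := by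
    intro d
    rw [hPd, map_prod]
    apply Finset.prod_eq_one
    intro κ hκ
    have h2κ := (hSdsub d κ hκ).1
    rw [map_add, map_one, aug_uu_pow (by omega), add_zero]
  have hNd : ∀ d, Pd d * sig (Pd d) = ∏ κ ∈ Sd d, hk n κ := by
    intro d
    rw [hPd, map_prod, ← Finset.prod_mul_distrib]
    rfl
  have hcond : ∀ d, Cond n (⇑(Pd d * sig (Pd d))) := by
    intro d
    have hsum : ∑ i : ZMod n, (Pd d) i = 1 := by
      rw [← aug_eq_sum]; exact haugPd d
    have hcoe : (⇑(Pd d * sig (Pd d)) : ZMod n → ZMod 2)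
        = cconv n (⇑(Pd d)) (cstar n (⇑(Pd d))) := by
      rw [coe_mul, coe_sig]
    obtain ⟨f0, f1, f2, f3⟩ := fwd hn hs (⇑(Pd d)) hsum
    rw [hcoe]
    exact ⟨f0, f1, f2, f3⟩
  set Fm : ({x // x ∈ K} → ZMod 2) → {v : ZMod n → ZMod 2 // Cond n v} :=
    fun d => ⟨⇑(Pd d * sig (Pd d)), hcond d⟩ with hFm
  have hFinj : Function.Injective Fm := by
    intro d d' h
    rw [hFm, Subtype.mk.injEq] at h
    have h2 : Pd d * sig (Pd d) = Pd d' * sig (Pd d') := AddMonoidAlgebra.ext (Finsupp.ext (fun i => congrFun h i))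
    rw [hNd, hNd] at h2
    have hSS : Sd d = Sd d' := prod_inj hn (hSdsub d) (hSdsub d') h2
    funext k
    have hk := k.2
    have e1 := hSdmem d k.1 hk
    have e2 := hSdmem d' k.1 hk
    have hiff : d k = 1 ↔ d' k = 1 := by
      constructor
      · intro hh
        have m1 : (k.1 : ℕ) ∈ Sd d := e1.mpr hh
        rw [hSS] at m1
        exact e2.mp m1
      · intro hh
        have m1 : (k.1 : ℕ) ∈ Sd d' := e2.mpr hh
        rw [← hSS] at m1
        exact e1.mp m1
    have hfin : ∀ x y : ZMod 2, (x = 1 ↔ y = 1) → x = y := by decide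
    exact hfin _ _ hiff
  set Gm : {v : ZMod n → ZMod 2 // Cond n v} → ({x // x ∈ K} → ZMod 2) :=
    fun c k => c.1 ((k.1 : ℕ) : ZMod n) with hGm
  have hGinj : Function.Injective Gm := by
    intro c c' h
    apply Subtype.ext
    apply determination hn hs c.2 c'.2
    intro m hm2 hmn
    have hmK : m ∈ K := by rw [hK, Finset.mem_Ico]; exact ⟨hm2, hmn⟩
    exact congrFun h ⟨m, hmK⟩
  have hinj : Function.Injective (Fm ∘ Gm) := hFinj.comp hGinj
  have hsurj : Function.Surjective (Fm ∘ Gm) := Finite.injective_iff_surjective.mp hinj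
  obtain ⟨c0, hc0⟩ := hsurj ⟨a, hc⟩
  refine ⟨⇑(Pd (Gm c0)), ?_⟩
  have hval : (⇑(Pd (Gm c0) * sig (Pd (Gm c0))) : ZMod n → ZMod 2) = a :=
    congrArg Subtype.val hc0
  rw [← coe_sig, ← coe_mul]
  exact hval.symm

end SD

theorem stmt_6 (n s : ℕ) [NeZero n] (hs : 2 ≤ s) (hn : n = 2 ^ s)
    (a : ZMod n → ZMod 2) (ha0 : a 0 = 1) :
    (∃ g : ZMod n → ZMod 2, a = cconv n g (cstar n g)) ↔
      ((∀ i : ZMod n, a i = a (-i)) ∧ a ((n / 2 : ℕ) : ZMod n) = 0 ∧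
        ∑ i ∈ (Finset.Ico 1 (n / 2)).filter (fun i => Odd i), a ((i : ℕ) : ZMod n) = 0) := by
  constructor
  · rintro ⟨g, rfl⟩
    have hg : ∑ i : ZMod n, g i = 1 := by
      have h := ha0
      rw [cconv] at h
      have hterm : ∀ i : ZMod n, g i * cstar n g (0 - i) = g i := by
        intro i
        rw [cstar, show -(0 - i) = i from by ring]
        exact (by decide : ∀ b : ZMod 2, b * b = b) (g i)
      rw [Finset.sum_congr rfl (fun i _ => hterm i)] at h
      exact h
    obtain ⟨-, f1, f2, f3⟩ := SD.fwd hn hs g hg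
    exact ⟨f1, f2, f3⟩
  · rintro ⟨h1, h2, h3⟩
    exact SD.backward hn hs a ⟨ha0, h1, h2, h3⟩
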